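/- Let A ⊆ B(E) be a unital subalgebra, T a partial isometry on the Banach space E, and S₁, S₂ partial isometries adjoint to T (i.e., T Sᵢ T = T, Sᵢ T Sᵢ = Sᵢ, with T, Sᵢ contractions) satisfying T A Sᵢ ⊆ A and Sᵢ T ∈ A' for i = 1, 2. Set αᵢ(a) = T a Sᵢ. Then α₁ and α₂ coincide on A if and only if α₁(1) = α₂(1), which holds if and only if α₁(1)α₂(1) = α₂(1)α₁(1). In particular α₁ = α₂ on A whenever A is commutative. -/
import Mathlib


/-- If `S₁, S₂` are partial isometries adjoint to a partial isometry `T`,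
both compatible with a unital subalgebra `A ⊆ B(E)` (i.e. `T A Sᵢ ⊆ A` and `Sᵢ T ∈ A'`),
then the induced endomorphisms `αᵢ(a) = T a Sᵢ` coincide on `A` iff `α₁(1) = α₂(1)`, which
holds iff `α₁(1)` and `α₂(1)` commute; in particular `α₁ = α₂` on `A` when `A` is
commutative. -/
theorem stmt8 {E : Type*} [NormedAddCommGroup E] [NormedSpace ℂ E]
    (A : Subalgebra ℂ (E →L[ℂ] E)) (T S₁ S₂ : E →L[ℂ] E)
    (hTc : ‖T‖ ≤ 1) (hS₁c : ‖S₁‖ ≤ 1) (hS₂c : ‖S₂‖ ≤ 1)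
    (h₁ : T * S₁ * T = T) (h₁' : S₁ * T * S₁ = S₁)
    (h₂ : T * S₂ * T = T) (h₂' : S₂ * T * S₂ = S₂)
    (hA₁ : ∀ a ∈ A, T * a * S₁ ∈ A) (hA₂ : ∀ a ∈ A, T * a * S₂ ∈ A)
    (hc₁ : ∀ a ∈ A, (S₁ * T) * a = a * (S₁ * T))
    (hc₂ : ∀ a ∈ A, (S₂ * T) * a = a * (S₂ * T)) :
    ((∀ a ∈ A, T * a * S₁ = T * a * S₂) ↔ T * S₁ = T * S₂) ∧
    (T * S₁ = T * S₂ ↔ (T * S₁) * (T * S₂) = (T * S₂) * (T * S₁)) ∧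
    ((∀ a ∈ A, ∀ b ∈ A, a * b = b * a) → ∀ a ∈ A, T * a * S₁ = T * a * S₂) := by
  -- key: `T a S₁ T = T a` for `a ∈ A`
  have key : ∀ a ∈ A, T * a * S₁ * T = T * a := by
    intro a ha
    calc T * a * S₁ * T = T * (a * (S₁ * T)) := by noncomm_ring
      _ = T * ((S₁ * T) * a) := by rw [hc₁ a ha]
      _ = (T * S₁ * T) * a := by noncomm_ring
      _ = T * a := by rw [h₁]
  -- backward direction of the first equivalence
  have main : T * S₁ = T * S₂ → ∀ a ∈ A, T * a * S₁ = T * a * S₂ := by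
    intro h a ha
    calc T * a * S₁ = T * a * (S₁ * T * S₁) := by rw [h₁']
      _ = T * a * (S₁ * (T * S₁)) := by noncomm_ring
      _ = T * a * (S₁ * (T * S₂)) := by rw [h]
      _ = (T * a * S₁ * T) * S₂ := by noncomm_ring
      _ = T * a * S₂ := by rw [key a ha]
  -- `(TS₂)(TS₁) = TS₁` and `(TS₁)(TS₂) = TS₂`
  have e1 : (T * S₁) * (T * S₂) = T * S₂ := by
    calc (T * S₁) * (T * S₂) = (T * S₁ * T) * S₂ := by noncomm_ring
      _ = T * S₂ := by rw [h₁]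
  have e2 : (T * S₂) * (T * S₁) = T * S₁ := by
    calc (T * S₂) * (T * S₁) = (T * S₂ * T) * S₁ := by noncomm_ring
      _ = T * S₁ := by rw [h₂]
  have iff2 : T * S₁ = T * S₂ ↔ (T * S₁) * (T * S₂) = (T * S₂) * (T * S₁) := by
    constructor
    · intro h; rw [h]
    · intro h; rw [e1, e2] at h; exact h.symm
  refine ⟨⟨fun h => ?_, main⟩, iff2, fun hcomm => ?_⟩
  · have := h 1 A.one_mem
    simpa using this
  · apply main
    rw [iff2]
    have m1 : T * S₁ ∈ A := by simpa using hA₁ 1 A.one_mem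
    have m2 : T * S₂ ∈ A := by simpa using hA₂ 1 A.one_mem
    exact hcomm _ m1 _ m2
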